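/- arXiv:2512.07468 — 2 statements merged into one kernel-verified Lean document; each statement's English description precedes it below -/
import Mathlib

section
/- Let $H_1, H_2$ be finite-dimensional complex inner product spaces and let $B$ be a Hermitian operator on $H_1 \otimes H_2$. Suppose that for all $t \in \mathbb{R}$ there exist unitaries $U_1(t)$ on $H_1$ and $U_2(t)$ on $H_2$ with $e^{-itB} = U_1(t) \otimes U_2(t)$. Then $B = A_1 \otimes \mathrm{id} + \mathrm{id} \otimes A_2$ for some Hermitian operators $A_1$ on $H_1$ and $A_2$ on $H_2$. -/
open Kronecker

attribute [local instance] Matrix.linftyOpNormedRing Matrix.linftyOpNormedAlgebra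

/-- Derivative at `0` of an entry of `t ↦ exp(-itB)`. -/
lemma entry_hasDerivAt {n : Type*} [Fintype n] [DecidableEq n]
    (B : Matrix n n ℂ) (p q : n) :
    HasDerivAt (fun t : ℝ => NormedSpace.exp ((-(Complex.I * (t : ℂ))) • B) p q)
      (-Complex.I * B p q) 0 := by
  set A : Matrix n n ℂ := (-Complex.I) • B with hA
  have h1 : HasDerivAt (fun z : ℂ => NormedSpace.exp (z • A)) A (((0 : ℝ) : ℂ)) := by
    have := hasDerivAt_exp_smul_const (𝕂 := ℂ) A (0 : ℂ)
    simp at this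
    exact this
  have h2 : HasDerivAt (fun t : ℝ => NormedSpace.exp (((t : ℝ) : ℂ) • A)) A 0 := by
    have := (h1.hasFDerivAt.restrictScalars ℝ).comp_hasDerivAt (0 : ℝ)
      (Complex.ofRealCLM.hasDerivAt)
    exact this.congr_deriv (one_smul ℂ A)
  have h3 : HasDerivAt (fun t : ℝ => NormedSpace.exp ((-(Complex.I * (t : ℂ))) • B)) A 0 := by
    convert h2 using 2 with t
    rw [hA, smul_smul]
    ring_nf
  -- apply the (continuous linear) entry map
  let L0 : Matrix n n ℂ →ₗ[ℂ] ℂ :=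
    (LinearMap.proj q).comp (LinearMap.proj (R := ℂ) (φ := fun _ : n => n → ℂ) p)
  let L : Matrix n n ℂ →L[ℝ] ℂ :=
    (LinearMap.toContinuousLinearMap L0).restrictScalars ℝ
  have h4 := (L.hasFDerivAt (x := NormedSpace.exp
      ((-(Complex.I * ((0 : ℝ) : ℂ))) • B))).comp_hasDerivAt 0 h3
  have h5 : L A = -Complex.I * B p q := by
    simp only [L, L0, hA, ContinuousLinearMap.coe_restrictScalars',
      LinearMap.coe_toContinuousLinearMap', LinearMap.coe_comp, Function.comp_apply,
      LinearMap.proj_apply, Matrix.smul_apply, smul_eq_mul]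
    rfl
  exact h4.congr_deriv h5

/-- If every time-evolution unitary `e^{-itB}` of a Hermitian `B` on `H₁ ⊗ H₂`
factorizes as a tensor product of unitaries, then `B` is 1-local:
`B = A₁ ⊗ id + id ⊗ A₂` with `A₁, A₂` Hermitian. -/
theorem stmt_14 {d1 d2 : ℕ}
    (B : Matrix (Fin d1 × Fin d2) (Fin d1 × Fin d2) ℂ) (hB : B.IsHermitian)
    (h : ∀ t : ℝ, ∃ U1 ∈ Matrix.unitaryGroup (Fin d1) ℂ,
      ∃ U2 ∈ Matrix.unitaryGroup (Fin d2) ℂ,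
        NormedSpace.exp ((-(Complex.I * (t : ℂ))) • B) = U1 ⊗ₖ U2) :
    ∃ (A1 : Matrix (Fin d1) (Fin d1) ℂ) (A2 : Matrix (Fin d2) (Fin d2) ℂ),
      A1.IsHermitian ∧ A2.IsHermitian ∧
        B = A1 ⊗ₖ (1 : Matrix (Fin d2) (Fin d2) ℂ) +
          (1 : Matrix (Fin d1) (Fin d1) ℂ) ⊗ₖ A2 := by
  rcases Nat.eq_zero_or_pos d1 with h1 | h1
  · refine ⟨0, 0, Matrix.isHermitian_zero, Matrix.isHermitian_zero, ?_⟩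
    subst h1
    ext ⟨i, j⟩ q
    exact i.elim0
  rcases Nat.eq_zero_or_pos d2 with h2 | h2
  · refine ⟨0, 0, Matrix.isHermitian_zero, Matrix.isHermitian_zero, ?_⟩
    subst h2
    ext ⟨i, j⟩ q
    exact j.elim0
  haveI : NeZero d1 := ⟨h1.ne'⟩
  haveI : NeZero d2 := ⟨h2.ne'⟩
  set E : ℝ → Matrix (Fin d1 × Fin d2) (Fin d1 × Fin d2) ℂ :=
    fun t => NormedSpace.exp ((-(Complex.I * (t : ℂ))) • B) with hE
  have hE0 : E 0 = 1 := by
    simp [hE, NormedSpace.exp_zero]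
  have key : ∀ (i k : Fin d1) (j l : Fin d2),
      B (i, j) (k, l) = (if j = l then B (i, 0) (k, 0) else 0)
        + (if i = k then B (0, j) (0, l) else 0)
        - (if i = k then (if j = l then B (0, 0) (0, 0) else 0) else 0) := by
    intro i k j l
    have hf : HasDerivAt
        (fun t : ℝ => E t (i, j) (k, l) * E t (0, 0) (0, 0)
          - E t (i, 0) (k, 0) * E t (0, j) (0, l))
        ((-Complex.I * B (i, j) (k, l)) * E 0 (0, 0) (0, 0)
          + E 0 (i, j) (k, l) * (-Complex.I * B (0, 0) (0, 0))
          - ((-Complex.I * B (i, 0) (k, 0)) * E 0 (0, j) (0, l)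
          + E 0 (i, 0) (k, 0) * (-Complex.I * B (0, j) (0, l)))) 0 :=
      (((entry_hasDerivAt B (i, j) (k, l)).mul (entry_hasDerivAt B (0, 0) (0, 0))).sub
        ((entry_hasDerivAt B (i, 0) (k, 0)).mul (entry_hasDerivAt B (0, j) (0, l))))
    have hzero : (fun t : ℝ => E t (i, j) (k, l) * E t (0, 0) (0, 0)
        - E t (i, 0) (k, 0) * E t (0, j) (0, l)) = fun _ => (0 : ℂ) := by
      funext t
      obtain ⟨U1, hU1, U2, hU2, hEq⟩ := h t
      have : E t = U1 ⊗ₖ U2 := hEq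
      rw [this]
      simp only [Matrix.kroneckerMap_apply]
      ring
    rw [hzero] at hf
    have hD := hf.unique (hasDerivAt_const 0 0)
    rw [hE0] at hD
    simp only [Matrix.one_apply, Prod.mk.injEq, if_true, and_true, true_and] at hD
    by_cases hik : i = k <;> by_cases hjl : j = l <;>
        simp only [hik, hjl, if_true, if_false, if_pos rfl, and_true, true_and,
          and_false, false_and, and_self, mul_one, one_mul, mul_zero, zero_mul,
          add_zero, zero_add, sub_zero, ite_true, ite_false] at hD ⊢
    · linear_combination Complex.I * hD +
        (B (k, l) (k, l) + B (0, 0) (0, 0) - B (k, 0) (k, 0) - B (0, l) (0, l)) * Complex.I_mul_I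
    · linear_combination Complex.I * hD + (B (k, j) (k, l) - B (0, j) (0, l)) * Complex.I_mul_I
    · linear_combination Complex.I * hD + (B (i, l) (k, l) - B (i, 0) (k, 0)) * Complex.I_mul_I
    · linear_combination Complex.I * hD + B (i, j) (k, l) * Complex.I_mul_I
  refine ⟨Matrix.of (fun i k => B (i, 0) (k, 0) - if i = k then B (0, 0) (0, 0) else 0),
    Matrix.of (fun j l => B (0, j) (0, l)), ?_, ?_, ?_⟩
  · ext i k
    simp only [Matrix.conjTranspose_apply, Matrix.of_apply, star_sub, apply_ite star,
      star_zero]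
    rw [hB.apply (i, 0) (k, 0)]
    rw [hB.apply (0, 0) (0, 0)]
    simp [eq_comm]
  · ext j l
    simp only [Matrix.conjTranspose_apply, Matrix.of_apply]
    exact hB.apply (0, j) (0, l)
  · ext ⟨i, j⟩ ⟨k, l⟩
    simp only [Matrix.add_apply, Matrix.kroneckerMap_apply, Matrix.of_apply, Matrix.one_apply]
    rw [key i k j l]
    by_cases hik : i = k <;> by_cases hjl : j = l <;> simp [hik, hjl] <;> ring
end

section
/- Let $H_1, H_2$ be finite-dimensional complex inner product spaces with $\dim H_1 \geq 2$ and $\dim H_2 \geq 2$, and let $B$ be a Hermitian operator on $H_1 \otimes H_2$ that is not of the form $A_1 \otimes \mathrm{id} + \mathrm{id} \otimes A_2$. Then there exist $t \in \mathbb{R}$ and a pure tensor $x_1 \otimes x_2$ such that $e^{-itB}(x_1 \otimes x_2)$ is not a pure tensor. -/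
open Kronecker

/-- A vector of `H₁ ⊗ H₂` (in the product basis) is a pure tensor if it is of the form
`x₁ ⊗ x₂`. -/
def IsPureTensor {d1 d2 : ℕ} (v : Fin d1 × Fin d2 → ℂ) : Prop :=
  ∃ (x1 : Fin d1 → ℂ) (x2 : Fin d2 → ℂ), ∀ p, v p = x1 p.1 * x2 p.2

namespace Stmt16Aux

variable {d1 d2 : ℕ}

/-- Expansion of `B` applied to a pure tensor. -/
lemma mulVec_eval (B : Matrix (Fin d1 × Fin d2) (Fin d1 × Fin d2) ℂ)
    (v : Fin d1 × Fin d2 → ℂ) (p : Fin d1 × Fin d2) :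
    B.mulVec v p = ∑ a : Fin d1, ∑ b : Fin d2, B p (a, b) * v (a, b) := by
  classical
  simp only [Matrix.mulVec, dotProduct, Fintype.sum_prod_type]

/-- The abbreviation for the first-order entanglement condition. -/
def Key (B : Matrix (Fin d1 × Fin d2) (Fin d1 × Fin d2) ℂ) : Prop :=
  ∀ (x : Fin d1 → ℂ) (y : Fin d2 → ℂ) (i j : Fin d1) (k l : Fin d2),
    B.mulVec (fun p => x p.1 * y p.2) (i, k) * (x j * y l)
      + x i * y k * B.mulVec (fun p => x p.1 * y p.2) (j, l)
    = B.mulVec (fun p => x p.1 * y p.2) (i, l) * (x j * y k)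
      + x i * y l * B.mulVec (fun p => x p.1 * y p.2) (j, k)

/-- If evolution preserves pure tensors, then differentiating the 2×2 minors of
`exp(-itB) (x ⊗ y)` at `t = 0` gives a polynomial identity on `B`. -/
lemma key (B : Matrix (Fin d1 × Fin d2) (Fin d1 × Fin d2) ℂ)
    (hp : ∀ (t : ℝ) (x1 : Fin d1 → ℂ) (x2 : Fin d2 → ℂ),
      IsPureTensor ((NormedSpace.exp ((-(Complex.I * (t : ℂ))) • B)).mulVec
        (fun p => x1 p.1 * x2 p.2))) : Key B := by
  classical
  intro x y i j k l
  letI : SeminormedRing (Matrix (Fin d1 × Fin d2) (Fin d1 × Fin d2) ℂ) :=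
    Matrix.linftyOpSemiNormedRing
  letI : NormedRing (Matrix (Fin d1 × Fin d2) (Fin d1 × Fin d2) ℂ) :=
    Matrix.linftyOpNormedRing
  letI : NormedAlgebra ℂ (Matrix (Fin d1 × Fin d2) (Fin d1 × Fin d2) ℂ) :=
    Matrix.linftyOpNormedAlgebra
  set v : Fin d1 × Fin d2 → ℂ := fun p => x p.1 * y p.2 with hv
  set M : Matrix (Fin d1 × Fin d2) (Fin d1 × Fin d2) ℂ := (-Complex.I) • B with hM
  have hexp : HasDerivAt (fun z : ℂ => NormedSpace.exp (z • M)) M 0 := by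
    have h0 := hasDerivAt_exp_smul_const M (0 : ℂ)
    rw [zero_smul, NormedSpace.exp_zero, one_mul] at h0
    exact h0
  have hu : ∀ p : Fin d1 × Fin d2,
      HasDerivAt (fun z : ℂ => (NormedSpace.exp (z • M)).mulVec v p) (M.mulVec v p) 0 := by
    intro p
    have hL : IsLinearMap ℂ
        (fun A : Matrix (Fin d1 × Fin d2) (Fin d1 × Fin d2) ℂ => A.mulVec v p) :=
      ⟨fun A A' => by simp [Matrix.add_mulVec],
       fun c A => by simp [Matrix.smul_mulVec]⟩
    let L : Matrix (Fin d1 × Fin d2) (Fin d1 × Fin d2) ℂ →L[ℂ] ℂ :=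
      LinearMap.toContinuousLinearMap (IsLinearMap.mk' _ hL)
    exact L.hasFDerivAt.comp_hasDerivAt (0 : ℂ) hexp
  have hu0 : ∀ p : Fin d1 × Fin d2,
      (NormedSpace.exp ((0:ℂ) • M)).mulVec v p = v p := by
    intro p
    simp [NormedSpace.exp_zero, Matrix.one_mulVec]
  have hF : HasDerivAt
      (fun z : ℂ => (NormedSpace.exp (z • M)).mulVec v (i,k)
          * (NormedSpace.exp (z • M)).mulVec v (j,l)
        - (NormedSpace.exp (z • M)).mulVec v (i,l)
          * (NormedSpace.exp (z • M)).mulVec v (j,k))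
      (M.mulVec v (i,k) * v (j,l) + v (i,k) * M.mulVec v (j,l)
        - (M.mulVec v (i,l) * v (j,k) + v (i,l) * M.mulVec v (j,k))) 0 := by
    have h1 := ((hu (i,k)).mul (hu (j,l))).sub ((hu (i,l)).mul (hu (j,k)))
    simp only [hu0] at h1
    exact h1
  have smul_eq : ∀ t : ℝ, (-(Complex.I * (t : ℂ))) • B = (t : ℂ) • M := by
    intro t
    rw [hM, smul_smul]
    congr 1
    ring
  have hzero : ∀ t : ℝ,
      (NormedSpace.exp (((t:ℝ):ℂ) • M)).mulVec v (i,k)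
          * (NormedSpace.exp (((t:ℝ):ℂ) • M)).mulVec v (j,l)
        - (NormedSpace.exp (((t:ℝ):ℂ) • M)).mulVec v (i,l)
          * (NormedSpace.exp (((t:ℝ):ℂ) • M)).mulVec v (j,k) = 0 := by
    intro t
    obtain ⟨x1, x2, hx⟩ := hp t x y
    rw [← hv] at hx
    rw [← smul_eq t]
    rw [hx (i,k), hx (j,l), hx (i,l), hx (j,k)]
    ring
  have hF' : HasDerivAt
      (fun z : ℂ => (NormedSpace.exp (z • M)).mulVec v (i,k)
          * (NormedSpace.exp (z • M)).mulVec v (j,l)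
        - (NormedSpace.exp (z • M)).mulVec v (i,l)
          * (NormedSpace.exp (z • M)).mulVec v (j,k))
      (M.mulVec v (i,k) * v (j,l) + v (i,k) * M.mulVec v (j,l)
        - (M.mulVec v (i,l) * v (j,k) + v (i,l) * M.mulVec v (j,k))) (((0:ℝ):ℂ)) := by
    rw [Complex.ofReal_zero]
    exact hF
  have hreal := hF'.comp_ofReal
  have hconst : HasDerivAt
      (fun t : ℝ => (NormedSpace.exp (((t:ℝ):ℂ) • M)).mulVec v (i,k)
          * (NormedSpace.exp (((t:ℝ):ℂ) • M)).mulVec v (j,l)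
        - (NormedSpace.exp (((t:ℝ):ℂ) • M)).mulVec v (i,l)
          * (NormedSpace.exp (((t:ℝ):ℂ) • M)).mulVec v (j,k)) 0 0 := by
    have he : (fun t : ℝ => (NormedSpace.exp (((t:ℝ):ℂ) • M)).mulVec v (i,k)
          * (NormedSpace.exp (((t:ℝ):ℂ) • M)).mulVec v (j,l)
        - (NormedSpace.exp (((t:ℝ):ℂ) • M)).mulVec v (i,l)
          * (NormedSpace.exp (((t:ℝ):ℂ) • M)).mulVec v (j,k)) = fun _ => (0:ℂ) :=
      funext hzero
    rw [he]
    exact hasDerivAt_const 0 0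
  have hD : M.mulVec v (i,k) * v (j,l) + v (i,k) * M.mulVec v (j,l)
      - (M.mulVec v (i,l) * v (j,k) + v (i,l) * M.mulVec v (j,k)) = 0 :=
    hreal.unique hconst
  have hw : ∀ p : Fin d1 × Fin d2, M.mulVec v p = -Complex.I * B.mulVec v p := by
    intro p
    rw [hM, Matrix.smul_mulVec]
    simp
  rw [hw (i,k), hw (j,l), hw (i,l), hw (j,k)] at hD
  have hkey : (-Complex.I) * (B.mulVec v (i,k) * v (j,l) + v (i,k) * B.mulVec v (j,l)
      - (B.mulVec v (i,l) * v (j,k) + v (i,l) * B.mulVec v (j,k))) = 0 := by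
    linear_combination hD
  have hne : (-Complex.I) ≠ 0 := neg_ne_zero.mpr Complex.I_ne_zero
  have hsub := (mul_eq_zero.mp hkey).resolve_left hne
  have heq := sub_eq_zero.mp hsub
  exact heq

lemma Zl (B : Matrix (Fin d1 × Fin d2) (Fin d1 × Fin d2) ℂ) (hk : Key B)
    {i j : Fin d1} {k l : Fin d2} (hij : i ≠ j) (hkl : k ≠ l) :
    B (j, l) (i, k) = 0 := by
  have hE := hk (Pi.single i 1) (Pi.single k 1) i j k l
  simp only [mulVec_eval, Pi.single_apply] at hE
  simp only [mul_ite, ite_mul, mul_one, mul_zero, one_mul, zero_mul,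
    Finset.sum_ite_eq', Finset.mem_univ, if_true] at hE
  simp only [if_pos rfl, if_neg (Ne.symm hij), if_neg (Ne.symm hkl)] at hE
  simpa using hE

lemma C1 (B : Matrix (Fin d1 × Fin d2) (Fin d1 × Fin d2) ℂ) (hk : Key B)
    {i j : Fin d1} {k l : Fin d2} (hij : i ≠ j) (hkl : k ≠ l) :
    B (j, l) (i, l) = B (j, k) (i, k) := by
  have hZ1 := Zl B hk hij hkl
  have hZ2 := Zl B hk hij (Ne.symm hkl)
  have hE := hk (Pi.single i 1) ((Pi.single k 1 : Fin d2 → ℂ) + Pi.single l 1) i j k l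
  simp only [mulVec_eval, Pi.single_apply, Pi.add_apply] at hE
  simp only [mul_add, add_mul, mul_ite, ite_mul, mul_one, mul_zero, one_mul, zero_mul,
    Finset.sum_add_distrib, Finset.sum_ite_eq', Finset.mem_univ, if_true] at hE
  simp only [if_pos rfl, if_neg (Ne.symm hij), if_neg hkl, if_neg (Ne.symm hkl)] at hE
  ring_nf at hE
  linear_combination hE - hZ1 + hZ2

lemma C2 (B : Matrix (Fin d1 × Fin d2) (Fin d1 × Fin d2) ℂ) (hk : Key B)
    {i j : Fin d1} {k l : Fin d2} (hij : i ≠ j) (hkl : k ≠ l) :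
    B (j, l) (j, k) = B (i, l) (i, k) := by
  have hZ1 := Zl B hk hij hkl
  have hZ2 := Zl B hk (Ne.symm hij) hkl
  have hE := hk ((Pi.single i 1 : Fin d1 → ℂ) + Pi.single j 1) (Pi.single k 1) i j k l
  simp only [mulVec_eval, Pi.single_apply, Pi.add_apply] at hE
  simp only [mul_add, add_mul, mul_ite, ite_mul, mul_one, mul_zero, one_mul, zero_mul,
    Finset.sum_add_distrib, Finset.sum_ite_eq', Finset.mem_univ, if_true] at hE
  simp only [if_pos rfl, if_neg hij, if_neg (Ne.symm hij), if_neg (Ne.symm hkl)] at hE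
  ring_nf at hE
  linear_combination hE - hZ1 + hZ2

lemma Dsplit (B : Matrix (Fin d1 × Fin d2) (Fin d1 × Fin d2) ℂ) (hk : Key B)
    {i j : Fin d1} {k l : Fin d2} (hij : i ≠ j) (hkl : k ≠ l) :
    B (i, k) (i, k) + B (j, l) (j, l) = B (i, l) (i, l) + B (j, k) (j, k) := by
  have hZa := Zl B hk hij hkl
  have hZb := Zl B hk hij (Ne.symm hkl)
  have hZc := Zl B hk (Ne.symm hij) hkl
  have hZd := Zl B hk (Ne.symm hij) (Ne.symm hkl)
  have h1 := C1 B hk hij hkl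
  have h2 := C1 B hk (Ne.symm hij) hkl
  have h3 := C2 B hk hij hkl
  have h4 := C2 B hk (Ne.symm hij) (Ne.symm hkl)
  have hE := hk ((Pi.single i 1 : Fin d1 → ℂ) + Pi.single j 1)
    ((Pi.single k 1 : Fin d2 → ℂ) + Pi.single l 1) i j k l
  simp only [mulVec_eval, Pi.single_apply, Pi.add_apply] at hE
  simp only [mul_add, add_mul, mul_ite, ite_mul, mul_one, mul_zero, one_mul, zero_mul,
    Finset.sum_add_distrib, Finset.sum_ite_eq', Finset.mem_univ, if_true] at hE
  simp only [if_pos rfl, if_neg hij, if_neg (Ne.symm hij), if_neg hkl,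
    if_neg (Ne.symm hkl)] at hE
  ring_nf at hE
  linear_combination hE - h4 - h1 - h3 + h2 - hZd - hZa + hZc + hZb

end Stmt16Aux

/-- A non-1-local Hermitian `B` on `H₁ ⊗ H₂` (with both factors of dimension `≥ 2`)
generates entanglement: some pure tensor is mapped by some `e^{-itB}` to a vector that
is not a pure tensor. -/
theorem stmt_16 {d1 d2 : ℕ} (hd1 : 2 ≤ d1) (hd2 : 2 ≤ d2)
    (B : Matrix (Fin d1 × Fin d2) (Fin d1 × Fin d2) ℂ) (hB : B.IsHermitian)
    (h : ¬ ∃ (A1 : Matrix (Fin d1) (Fin d1) ℂ) (A2 : Matrix (Fin d2) (Fin d2) ℂ),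
      B = A1 ⊗ₖ (1 : Matrix (Fin d2) (Fin d2) ℂ) +
        (1 : Matrix (Fin d1) (Fin d1) ℂ) ⊗ₖ A2) :
    ∃ (t : ℝ) (x1 : Fin d1 → ℂ) (x2 : Fin d2 → ℂ),
      ¬ IsPureTensor
        ((NormedSpace.exp ((-(Complex.I * (t : ℂ))) • B)).mulVec
          (fun p => x1 p.1 * x2 p.2)) := by
  classical
  by_contra hcon
  push_neg at hcon
  have hk : Stmt16Aux.Key B := Stmt16Aux.key B hcon
  set i0 : Fin d1 := ⟨0, by omega⟩ with hi0
  set k0 : Fin d2 := ⟨0, by omega⟩ with hk0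
  apply h
  refine ⟨Matrix.of fun i a => B (i, k0) (a, k0),
    Matrix.of fun k b => B (i0, k) (i0, b)
      - if k = b then B (i0, k0) (i0, k0) else 0, ?_⟩
  ext ⟨i, kk⟩ ⟨a, b⟩
  simp only [Matrix.add_apply, Matrix.kroneckerMap_apply, Matrix.one_apply, Matrix.of_apply]
  rcases eq_or_ne i a with rfl | hia
  · rcases eq_or_ne kk b with rfl | hkb
    · simp only [if_pos rfl, eq_self_iff_true, if_true, mul_one, one_mul]
      rcases eq_or_ne i i0 with rfl | hii0
      · ring
      · rcases eq_or_ne kk k0 with rfl | hkk0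
        · ring
        · linear_combination Stmt16Aux.Dsplit B hk hii0 hkk0
    · simp only [if_neg hkb, if_pos rfl, eq_self_iff_true, if_true, mul_zero, one_mul,
        sub_zero, zero_add]
      rcases eq_or_ne i i0 with rfl | hii0
      · ring
      · linear_combination Stmt16Aux.C2 B hk (Ne.symm hii0) (Ne.symm hkb)
  · rcases eq_or_ne kk b with rfl | hkb
    · simp only [if_pos rfl, eq_self_iff_true, if_true, if_neg hia, mul_one, zero_mul, add_zero]
      rcases eq_or_ne kk k0 with rfl | hkk0
      · ring
      · linear_combination Stmt16Aux.C1 B hk (Ne.symm hia) (Ne.symm hkk0)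
    · simp only [if_neg hkb, if_neg hia, mul_zero, zero_mul, add_zero]
      linear_combination Stmt16Aux.Zl B hk (Ne.symm hia) (Ne.symm hkb)
end
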